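/- arXiv:2211.10067 — 3 statements merged into one kernel-verified Lean document; each statement's English description precedes it below -/
import Mathlib

section
/- Let f : ℝ → ℝ be continuous with f(0) = 0, F(t) = ∫₀ᵗ f(s) ds, and suppose t ↦ f(t)/t is strictly increasing on (0, ∞). Then the function t ↦ t·f(t) − 2·F(t) is strictly increasing on (0, ∞). -/
theorem stmt_1 (f : ℝ → ℝ) (hf : Continuous f) (h0 : f 0 = 0)
    (F : ℝ → ℝ) (hF : ∀ t, F t = ∫ s in (0:ℝ)..t, f s)
    (hmono : StrictMonoOn (fun t => f t / t) (Set.Ioi 0)) :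
    StrictMonoOn (fun t => t * f t - 2 * F t) (Set.Ioi 0) := by
  intro a ha b hb hab
  simp only [Set.mem_Ioi] at ha hb
  set c := f b / b with hc
  have hint : ∀ x y : ℝ, IntervalIntegrable f MeasureTheory.volume x y :=
    fun x y => hf.intervalIntegrable x y
  have hFab : F b - F a = ∫ s in a..b, f s := by
    rw [hF a, hF b, ← intervalIntegral.integral_add_adjacent_intervals (hint 0 a) (hint a b)]
    ring
  have hpos : ∀ s ∈ Set.Ioo a b, 0 < c * s - f s := by
    intro s hs
    have hs0 : 0 < s := lt_trans ha hs.1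
    have h1 : f s / s < c := hmono (Set.mem_Ioi.mpr hs0) (Set.mem_Ioi.mpr hb) hs.2
    have h2 : f s < c * s := (div_lt_iff₀ hs0).mp h1
    linarith
  have hintlt : 0 < ∫ s in a..b, (c * s - f s) := by
    apply intervalIntegral.intervalIntegral_pos_of_pos_on
    · exact (((by continuity : Continuous fun s : ℝ => c * s)).sub hf).intervalIntegrable a b
    · exact hpos
    · exact hab
  have hval : (∫ s in a..b, (c * s - f s)) = c * (b ^ 2 - a ^ 2) / 2 - (F b - F a) := by
    rw [intervalIntegral.integral_sub
        (((by continuity : Continuous fun s : ℝ => c * s)).intervalIntegrable a b) (hint a b),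
      intervalIntegral.integral_const_mul, integral_id, hFab]
    ring
  have hfa : f a / a < c := hmono (Set.mem_Ioi.mpr ha) (Set.mem_Ioi.mpr hb) hab
  have hfaa : f a = a * (f a / a) := by field_simp
  have hfbb : f b = b * c := by rw [hc]; field_simp
  have hsq : 0 < a * a := mul_pos ha ha
  simp only []
  nlinarith [hintlt, hval, mul_pos hsq (sub_pos.mpr hfa)]
end

section
/- Let f : ℝ → ℝ be continuous with f(0) = 0, F(t) = ∫₀ᵗ f(s) ds, and suppose t ↦ f(t)/|t| is strictly increasing on (−∞, 0). Then t ↦ t·f(t) − 2·F(t) is strictly decreasing on (−∞, 0). -/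
theorem stmt_2 (f : ℝ → ℝ) (hf : Continuous f) (h0 : f 0 = 0)
    (F : ℝ → ℝ) (hF : ∀ t, F t = ∫ s in (0:ℝ)..t, f s)
    (hmono : StrictMonoOn (fun t => f t / |t|) (Set.Iio 0)) :
    StrictAntiOn (fun t => t * f t - 2 * F t) (Set.Iio 0) := by
  intro a ha b hb hab
  have ha0 : a < 0 := ha
  have hb0 : b < 0 := hb
  set ga := f a / (-a) with hga
  set gb := f b / (-b) with hgb
  have hfa : f a = -a * ga := by
    have h := div_mul_cancel₀ (f a) (show (-a) ≠ 0 by linarith)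
    rw [hga]; linarith [h]
  have hfb : f b = -b * gb := by
    have h := div_mul_cancel₀ (f b) (show (-b) ≠ 0 by linarith)
    rw [hgb]; linarith [h]
  have hgab : ga < gb := by
    have h := hmono ha hb hab
    simp only [abs_of_neg ha0, abs_of_neg hb0] at h
    rw [hga, hgb]; exact h
  -- F b - F a = ∫ f on a..b
  have hint : ∀ u v : ℝ, IntervalIntegrable f MeasureTheory.volume u v :=
    fun u v => hf.intervalIntegrable u v
  have hFab : F b - F a = ∫ s in a..b, f s := by
    rw [hF a, hF b, intervalIntegral.integral_interval_sub_left (hint 0 b) (hint 0 a)]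
  -- positivity of the auxiliary integral
  have hmul : Continuous (fun s : ℝ => s * ga) := continuous_id.mul continuous_const
  have hcont : Continuous (fun s : ℝ => f s + s * ga) := hf.add hmul
  have hpos : ∀ s ∈ Set.Ioo a b, 0 < f s + s * ga := by
    intro s hs
    have hs0 : s < 0 := lt_trans hs.2 hb0
    have := hmono ha (Set.mem_Iio.mpr hs0) hs.1
    have h1 : ga < f s / (-s) := by
      simpa [abs_of_neg ha0, abs_of_neg hs0, hga] using this
    have h2 : ga * (-s) < f s := (lt_div_iff₀ (by linarith : (0:ℝ) < -s)).mp h1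
    linarith
  have hIpos : 0 < ∫ s in a..b, (f s + s * ga) :=
    intervalIntegral.intervalIntegral_pos_of_pos_on
      (hcont.intervalIntegrable a b) hpos hab
  have hsplit : (∫ s in a..b, (f s + s * ga))
      = (∫ s in a..b, f s) + (b ^ 2 - a ^ 2) / 2 * ga := by
    have h2 : (∫ s in a..b, s * ga) = (∫ s in a..b, s) * ga :=
      intervalIntegral.integral_mul_const ga (fun s => s)
    rw [intervalIntegral.integral_add (hint a b) (hmul.intervalIntegrable a b), h2, integral_id]
  rw [hsplit] at hIpos
  have key : ga * (a ^ 2 - b ^ 2) < 2 * (F b - F a) := by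
    rw [hFab]; nlinarith
  have hb2 : 0 ≤ (gb - ga) * b ^ 2 :=
    mul_nonneg (le_of_lt (sub_pos.mpr hgab)) (sq_nonneg b)
  simp only
  nlinarith [key, hb2, hfa, hfb]
end

section
/- Let f : ℝ → ℝ be continuous with t ↦ f(t)/t strictly increasing on (0, ∞), and in a Hilbert space let u ≥ 0, u ≠ 0 satisfy ‖u‖² ≤ ∫ f(u)·u. If t > 0 is such that t²‖u‖² = ∫ f(tu)·tu (i.e., tu lies on the Nehari set), then t ≤ 1. -/
open MeasureTheory

theorem stmt_15 (f : ℝ → ℝ) (hf : Continuous f)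
    (hmono : StrictMonoOn (fun t => f t / t) (Set.Ioi 0))
    {E : Type*} [NormedAddCommGroup E] [InnerProductSpace ℝ E]
    {X : Type*} [MeasurableSpace X] (μ : Measure X)
    (u : E) (hu : u ≠ 0) (U : X → ℝ) (hU : ∀ x, 0 ≤ U x)
    (hint : Integrable (fun x => f (U x) * U x) μ)
    (hle : ‖u‖ ^ 2 ≤ ∫ x, f (U x) * U x ∂μ)
    (t : ℝ) (ht : 0 < t)
    (hintt : Integrable (fun x => f (t * U x) * (t * U x)) μ)
    (hNehari : t ^ 2 * ‖u‖ ^ 2 = ∫ x, f (t * U x) * (t * U x) ∂μ) :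
    t ≤ 1 := by
  by_contra hcon
  push_neg at hcon
  have hn : ‖u‖ ≠ 0 := norm_ne_zero_iff.mpr hu
  have hnorm : (0:ℝ) < ‖u‖ ^ 2 := by positivity
  -- g = f(tU)·tU − t²·f(U)·U is nonnegative, strictly positive where U > 0
  set g : X → ℝ := fun x => f (t * U x) * (t * U x) - t ^ 2 * (f (U x) * U x) with hg
  have hgpos : ∀ x, 0 < U x → 0 < g x := by
    intro x hUx
    have h1 : f (U x) / U x < f (t * U x) / (t * U x) := by
      apply hmono (Set.mem_Ioi.mpr hUx)
        (Set.mem_Ioi.mpr (by positivity))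
      nlinarith
    have htU : 0 < t * U x := by positivity
    have := (div_lt_div_iff₀ hUx htU).mp h1
    simp only [hg]
    nlinarith
  have hgnonneg : ∀ x, 0 ≤ g x := by
    intro x
    rcases (hU x).lt_or_eq with h | h
    · exact (hgpos x h).le
    · simp [hg, ← h]
  have hgint : Integrable g μ := hintt.sub (hint.const_mul (t ^ 2))
  have hintg : ∫ x, g x ∂μ = ∫ x, f (t * U x) * (t * U x) ∂μ
      - t ^ 2 * ∫ x, f (U x) * U x ∂μ := by
    rw [integral_sub hintt (hint.const_mul (t ^ 2)), integral_const_mul]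
  have hintg_le : ∫ x, g x ∂μ ≤ 0 := by
    rw [hintg, ← hNehari]
    nlinarith
  have hintg_ge : 0 ≤ ∫ x, g x ∂μ := integral_nonneg hgnonneg
  have hzero : ∫ x, g x ∂μ = 0 := le_antisymm hintg_le hintg_ge
  have hgae : g =ᵐ[μ] 0 :=
    (integral_eq_zero_iff_of_nonneg hgnonneg hgint).mp hzero
  have hUae : (fun x => f (U x) * U x) =ᵐ[μ] 0 := by
    filter_upwards [hgae] with x hx
    rcases (hU x).lt_or_eq with h | h
    · exact absurd hx (by simpa using (hgpos x h).ne')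
    · simp [← h]
  have : ∫ x, f (U x) * U x ∂μ = 0 := by
    rw [integral_congr_ae hUae]; simp
  linarith
end
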